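/- For all real s ∈ [0, 0.9], integers k, r ≥ 3, and natural numbers n ≥ max(e^{100k}, r^{100}): every set S of n^{k−s} points in the grid [n]^k contains at least n^{2k−(k+1)s} / (r^{k+1} · (1000·9^k)^{k+1} · log n) collinear r-tuples. -/

import Mathlib

open Finset

/-- binomial lower bound -/
lemma SSG.choose_aux (m r : ℕ) (hr : 1 ≤ r) : m ≤ m.choose r + 2 * r := by
  rcases le_or_gt m (2*r) with h | h
  · omega
  · have key : ∀ q : ℕ, ∀ m : ℕ, 1 ≤ q → q ≤ m → m + 1 ≤ m.choose q + q := by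
      intro q
      induction q with
      | zero => omega
      | succ p ih =>
        intro m hq hm
        rcases Nat.eq_or_lt_of_le hq with h1 | h1
        · simp [← h1, Nat.choose_one_right]
        · have hp : 1 ≤ p := by omega
          obtain ⟨m', rfl⟩ : ∃ m', m = m' + 1 := ⟨m - 1, by omega⟩
          have := ih m' hp (by omega)
          have pas : (m' + 1).choose (p+1) = m'.choose p + m'.choose (p+1) :=
            Nat.choose_succ_succ m' p
          omega
    have := key r m hr (by omega)
    omega

/-- telescoping bound : ∑_{g=2}^{t} 1/g^3 ≤ 1/4 -/
lemma SSG.sum_cube_aux (t : ℕ) : ∑ g ∈ Finset.Icc 2 t, ((g:ℝ))⁻¹ ^ 3 ≤ 1/4 := by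
  have hmap : Finset.Icc 2 t = (Finset.range (t - 1)).image (fun j => j + 2) := by
    ext x
    simp only [Finset.mem_Icc, Finset.mem_image, Finset.mem_range]
    constructor
    · intro ⟨h1, h2⟩; exact ⟨x - 2, by omega, by omega⟩
    · rintro ⟨j, hj, rfl⟩; omega
  rw [hmap, Finset.sum_image (by intro a _ b _ h; simp only at h; omega)]
  set F : ℕ → ℝ := fun j => 1 / (2 * ((j:ℝ)+1) * ((j:ℝ)+2)) with hF
  have hpt : ∀ j ∈ Finset.range (t-1), ((j + 2 : ℕ):ℝ)⁻¹ ^ 3 ≤ F j - F (j+1) := by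
    intro j _
    simp only [hF]
    have h1 : (0:ℝ) < (j:ℝ) + 1 := by positivity
    have h2 : (0:ℝ) < (j:ℝ) + 2 := by positivity
    have h3 : (0:ℝ) < (j:ℝ) + 3 := by positivity
    push_cast
    rw [div_sub_div _ _ (by positivity) (by positivity), inv_pow,
      inv_eq_one_div, div_le_div_iff₀ (by positivity) (by positivity)]
    nlinarith [sq_nonneg ((j:ℝ)), Nat.cast_nonneg (α := ℝ) j]
  calc ∑ j ∈ Finset.range (t-1), ((j + 2 : ℕ):ℝ)⁻¹ ^ 3
      ≤ ∑ j ∈ Finset.range (t-1), (F j - F (j+1)) := Finset.sum_le_sum hpt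
    _ = F 0 - F (t-1) := Finset.sum_range_sub' F (t-1)
    _ ≤ 1/4 := by
        have : 0 < F (t-1) := by positivity
        simp only [hF] at this ⊢
        nlinarith [this]

namespace SSG

variable {k : ℕ} [NeZero k]

noncomputable def mval (d : Fin k → ℕ) (p : Fin k → ℤ) : ℤ :=
  Finset.univ.inf' Finset.univ_nonempty (fun i => (p i - 1) / (d i : ℤ))

noncomputable def bse (d : Fin k → ℕ) (p : Fin k → ℤ) : Fin k → ℤ :=
  fun i => p i - mval d p * (d i : ℤ)

lemma mval_le (d : Fin k → ℕ) (p : Fin k → ℤ) (i : Fin k) :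
    mval d p ≤ (p i - 1) / (d i : ℤ) :=
  Finset.inf'_le _ (Finset.mem_univ i)

lemma mval_nonneg (d : Fin k → ℕ) (p : Fin k → ℤ) (hd : ∀ i, 1 ≤ d i)
    (hp : ∀ i, 1 ≤ p i) : 0 ≤ mval d p := by
  apply Finset.le_inf'
  intro i _
  exact Int.ediv_nonneg (by have := hp i; omega) (by exact_mod_cast Nat.zero_le (d i))

lemma bse_ge_one (d : Fin k → ℕ) (p : Fin k → ℤ) (hd : ∀ i, 1 ≤ d i)
    (i : Fin k) : 1 ≤ bse d p i := by
  have h1 : mval d p ≤ (p i - 1) / (d i : ℤ) := mval_le d p i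
  have hdi : (0:ℤ) < (d i : ℤ) := by exact_mod_cast hd i
  have := (Int.le_ediv_iff_mul_le hdi).mp h1
  unfold bse
  nlinarith

lemma bse_le (d : Fin k → ℕ) (p : Fin k → ℤ) (hd : ∀ i, 1 ≤ d i)
    (hp : ∀ i, 1 ≤ p i) (i : Fin k) : bse d p i ≤ p i := by
  have h0 : 0 ≤ mval d p := mval_nonneg d p hd hp
  have hdi : (0:ℤ) ≤ (d i : ℤ) := by positivity
  unfold bse
  nlinarith

lemma bse_exists_small (d : Fin k → ℕ) (p : Fin k → ℤ) (hd : ∀ i, 1 ≤ d i) :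
    ∃ i, bse d p i ≤ (d i : ℤ) := by
  obtain ⟨i, -, hi⟩ := Finset.exists_mem_eq_inf' (Finset.univ_nonempty)
    (fun i => (p i - 1) / (d i : ℤ))
  refine ⟨i, ?_⟩
  have hdi : (0:ℤ) < (d i : ℤ) := by exact_mod_cast hd i
  have hmod := Int.emod_lt_of_pos (p i - 1) hdi
  have hdm := Int.mul_ediv_add_emod (p i - 1) (d i : ℤ)
  unfold bse
  rw [show mval d p = (p i - 1) / (d i : ℤ) from hi]
  have hc : (p i - 1) / (d i : ℤ) * (d i : ℤ) = (d i : ℤ) * ((p i - 1) / (d i : ℤ)) := mul_comm _ _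
  omega

lemma bse_eq_self_add (d : Fin k → ℕ) (p : Fin k → ℤ) (i : Fin k) :
    p i = bse d p i + mval d p * (d i : ℤ) := by unfold bse; ring


def dirs (k t : ℕ) : Finset (Fin k → ℕ) :=
  (Fintype.piFinset fun _ : Fin k => Finset.Icc 1 t).filter
    fun d => Finset.univ.gcd d = 1

open Classical in
noncomputable def fiber (S' : Finset (Fin k → ℤ)) (d : Fin k → ℕ) (b : Fin k → ℤ) :
    Finset (Fin k → ℤ) := S'.filter fun p => bse d p = b

noncomputable def img (S' : Finset (Fin k → ℤ)) (d : Fin k → ℕ) : Finset (Fin k → ℤ) :=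
  S'.image (bse d)

noncomputable def alig (S' : Finset (Fin k → ℤ)) (r : ℕ) (d : Fin k → ℕ) :
    Finset (Finset (Fin k → ℤ)) :=
  (img S' d).biUnion fun b => (fiber S' d b).powersetCard r

lemma mem_dirs {t : ℕ} {d : Fin k → ℕ} (hd : d ∈ dirs k t) :
    (∀ i, 1 ≤ d i ∧ d i ≤ t) ∧ Finset.univ.gcd d = 1 := by
  simp only [dirs, Finset.mem_filter, Fintype.mem_piFinset, Finset.mem_Icc] at hd
  exact ⟨fun i => hd.1 i, hd.2⟩

lemma dirs_card {t : ℕ} (hk : 3 ≤ k) :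
    (3:ℝ)/4 * (t:ℝ)^k ≤ ((dirs k t).card : ℝ) := by
  classical
  set B := Fintype.piFinset fun _ : Fin k => Finset.Icc 1 t with hB
  have hBcard : B.card = t ^ k := by
    rw [hB, Fintype.card_piFinset]
    simp [Nat.card_Icc]
  set N := B.filter (fun d => ¬ Finset.univ.gcd d = 1) with hN
  have hsplit : (dirs k t).card + N.card = B.card :=
    Finset.card_filter_add_card_filter_not _
  -- bound N
  have hsub : N ⊆ (Finset.Icc 2 t).biUnion
      (fun g => Fintype.piFinset fun _ : Fin k => (Finset.Icc 1 t).filter (g ∣ ·)) := by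
    intro d hd
    simp only [hN, Finset.mem_filter, hB, Fintype.mem_piFinset, Finset.mem_Icc] at hd
    obtain ⟨hdB, hdg⟩ := hd
    set g := Finset.univ.gcd d with hg
    have hdvd : ∀ i, g ∣ d i := fun i => Finset.gcd_dvd (Finset.mem_univ i)
    have i0 : Fin k := ⟨0, by omega⟩
    have hg1 : 1 ≤ d i0 := (hdB i0).1
    have hgle : g ≤ t := le_trans (Nat.le_of_dvd (by omega) (hdvd i0)) (hdB i0).2
    have hgne : g ≠ 0 := by
      intro h0
      have := hdvd i0
      rw [h0] at this
      omega
    have hg2 : 2 ≤ g := by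
      rcases Nat.lt_or_ge g 2 with h | h
      · interval_cases g <;> simp_all
      · exact h
    rw [Finset.mem_biUnion]
    exact ⟨g, Finset.mem_Icc.mpr ⟨hg2, hgle⟩, by
      rw [Fintype.mem_piFinset]
      intro i
      rw [Finset.mem_filter, Finset.mem_Icc]
      exact ⟨hdB i, hdvd i⟩⟩
  have hNle : N.card ≤ ∑ g ∈ Finset.Icc 2 t, (t / g) ^ k := by
    calc N.card ≤ _ := Finset.card_le_card hsub
      _ ≤ ∑ g ∈ Finset.Icc 2 t, (Fintype.piFinset fun _ : Fin k =>
            (Finset.Icc 1 t).filter (g ∣ ·)).card := Finset.card_biUnion_le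
      _ = ∑ g ∈ Finset.Icc 2 t, (t / g) ^ k := by
          apply Finset.sum_congr rfl
          intro g _
          rw [Fintype.card_piFinset]
          have : Finset.Icc 1 t = Finset.Ioc 0 t := by ext x; simp [Nat.lt_iff_add_one_le]
          rw [this, Nat.Ioc_filter_dvd_card_eq_div]
          simp
  have hNreal : (N.card : ℝ) ≤ (t:ℝ)^k / 4 := by
    have h1 : ((∑ g ∈ Finset.Icc 2 t, (t / g) ^ k : ℕ) : ℝ)
        ≤ ∑ g ∈ Finset.Icc 2 t, (t:ℝ)^k * ((g:ℝ))⁻¹^3 := by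
      push_cast
      apply Finset.sum_le_sum
      intro g hg
      rw [Finset.mem_Icc] at hg
      have hg0 : (0:ℝ) < (g:ℝ) := by exact_mod_cast by omega
      have hc : ((t / g : ℕ) : ℝ) ≤ (t:ℝ) / (g:ℝ) := Nat.cast_div_le
      have hc0 : (0:ℝ) ≤ ((t / g : ℕ) : ℝ) := by positivity
      calc ((t / g : ℕ) : ℝ)^k ≤ ((t:ℝ)/(g:ℝ))^k := by
            exact pow_le_pow_left₀ hc0 hc k
        _ = (t:ℝ)^k / (g:ℝ)^k := div_pow _ _ _
        _ ≤ (t:ℝ)^k / (g:ℝ)^3 := by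
            apply div_le_div_of_nonneg_left (by positivity) (by positivity)
            exact pow_le_pow_right₀ (by exact_mod_cast by omega) hk
        _ = (t:ℝ)^k * ((g:ℝ))⁻¹^3 := by rw [inv_pow]; ring
    have h2 : ∑ g ∈ Finset.Icc 2 t, (t:ℝ)^k * ((g:ℝ))⁻¹^3
        = (t:ℝ)^k * ∑ g ∈ Finset.Icc 2 t, ((g:ℝ))⁻¹^3 := by
      rw [Finset.mul_sum]
    have h3 := SSG.sum_cube_aux t
    calc (N.card : ℝ) ≤ ((∑ g ∈ Finset.Icc 2 t, (t / g) ^ k : ℕ) : ℝ) := by exact_mod_cast hNle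
      _ ≤ (t:ℝ)^k * ∑ g ∈ Finset.Icc 2 t, ((g:ℝ))⁻¹^3 := by rw [← h2]; exact h1
      _ ≤ (t:ℝ)^k * (1/4) := by
          apply mul_le_mul_of_nonneg_left h3 (by positivity)
      _ = (t:ℝ)^k / 4 := by ring
  have hD : ((dirs k t).card : ℝ) = (t:ℝ)^k - (N.card:ℝ) := by
    have : ((dirs k t).card : ℝ) + (N.card:ℝ) = (t:ℝ)^k := by
      exact_mod_cast congrArg (Nat.cast (R := ℝ)) (hsplit.trans hBcard)
    linarith
  rw [hD]
  linarith

lemma img_card {S' : Finset (Fin k → ℤ)} {d : Fin k → ℕ} {t n : ℕ}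
    (hS : ∀ p ∈ S', ∀ i, 1 ≤ p i ∧ p i ≤ (n:ℤ))
    (hd : ∀ i, 1 ≤ d i ∧ d i ≤ t) :
    (img S' d).card ≤ k * t * n^(k-1) := by
  classical
  have hsub : img S' d ⊆ Finset.univ.biUnion fun i : Fin k =>
      Fintype.piFinset fun j => Finset.Icc (1:ℤ) (if j = i then (d i : ℤ) else (n:ℤ)) := by
    intro b hb
    obtain ⟨p, hp, rfl⟩ := Finset.mem_image.mp hb
    obtain ⟨i0, hi0⟩ := bse_exists_small d p (fun i => (hd i).1)
    rw [Finset.mem_biUnion]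
    refine ⟨i0, Finset.mem_univ _, ?_⟩
    rw [Fintype.mem_piFinset]
    intro j
    rw [Finset.mem_Icc]
    refine ⟨bse_ge_one d p (fun i => (hd i).1) j, ?_⟩
    by_cases hji : j = i0
    · subst hji; simp only [if_pos rfl]; exact hi0
    · rw [if_neg hji]
      exact le_trans (bse_le d p (fun i => (hd i).1) (fun i => (hS p hp i).1) j)
        (hS p hp j).2
  calc (img S' d).card ≤ _ := Finset.card_le_card hsub
    _ ≤ ∑ i : Fin k, (Fintype.piFinset fun j =>
        Finset.Icc (1:ℤ) (if j = i then (d i : ℤ) else (n:ℤ))).card := Finset.card_biUnion_le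
    _ ≤ ∑ _i : Fin k, t * n^(k-1) := by
        apply Finset.sum_le_sum
        intro i _
        rw [Fintype.card_piFinset]
        have hprod : ∏ j : Fin k, (Finset.Icc (1:ℤ) (if j = i then (d i : ℤ) else (n:ℤ))).card
            = (d i) * n^(k-1) := by
          rw [← Finset.mul_prod_erase Finset.univ _ (Finset.mem_univ i)]
          congr 1
          · simp [Int.card_Icc]
          · rw [Finset.prod_congr rfl (g := fun _ => n) (by
              intro j hj
              have : j ≠ i := (Finset.mem_erase.mp hj).1
              simp [this, Int.card_Icc])]
            rw [Finset.prod_const, Finset.card_erase_of_mem (Finset.mem_univ i)]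
            simp
        rw [hprod]
        exact Nat.mul_le_mul_right _ (hd i).2
    _ = k * t * n^(k-1) := by
        rw [Finset.sum_const, Finset.card_univ]
        simp [mul_assoc]

lemma alig_lb {S' : Finset (Fin k → ℤ)} {d : Fin k → ℕ} {r : ℕ} (hr : 1 ≤ r) :
    S'.card ≤ (alig S' r d).card + 2 * r * (img S' d).card := by
  classical
  have hcard : S'.card = ∑ b ∈ img S' d, (fiber S' d b).card := by
    rw [img]
    exact Finset.card_eq_sum_card_image (bse d) S'
  have haligcard : (alig S' r d).card = ∑ b ∈ img S' d, ((fiber S' d b).card).choose r := by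
    rw [alig, Finset.card_biUnion]
    · exact Finset.sum_congr rfl fun b _ => Finset.card_powersetCard r _
    · intro b hb b' hb' hne
      simp only [Function.onFun, Finset.disjoint_left]
      intro T hT hT'
      rw [Finset.mem_powersetCard] at hT hT'
      have hTne : T.Nonempty := Finset.card_pos.mp (by omega)
      obtain ⟨p, hp⟩ := hTne
      have h1 := Finset.mem_filter.mp (hT.1 hp)
      have h2 := Finset.mem_filter.mp (hT'.1 hp)
      exact hne (h1.2 ▸ h2.2)
  rw [hcard, haligcard]
  have : ∑ b ∈ img S' d, (fiber S' d b).card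
      ≤ ∑ b ∈ img S' d, (((fiber S' d b).card).choose r + 2 * r) :=
    Finset.sum_le_sum fun b _ => SSG.choose_aux _ r hr
  rw [Finset.sum_add_distrib, Finset.sum_const, smul_eq_mul] at this
  have hcomm : (img S' d).card * (2 * r) = 2 * r * (img S' d).card := Nat.mul_comm _ _
  omega

lemma alig_mem {S' : Finset (Fin k → ℤ)} {d : Fin k → ℕ} {r : ℕ} {T : Finset (Fin k → ℤ)}
    (hT : T ∈ alig S' r d) :
    T ⊆ S' ∧ T.card = r ∧ ∃ b, ∀ p ∈ T, bse d p = b := by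
  classical
  rw [alig, Finset.mem_biUnion] at hT
  obtain ⟨b, _, hTb⟩ := hT
  rw [Finset.mem_powersetCard] at hTb
  refine ⟨fun p hp => (Finset.mem_filter.mp (hTb.1 hp)).1, hTb.2, b,
    fun p hp => (Finset.mem_filter.mp (hTb.1 hp)).2⟩

lemma alig_disj {S' : Finset (Fin k → ℤ)} {d d' : Fin k → ℕ} {r t : ℕ} (hr : 2 ≤ r)
    (hd : d ∈ dirs k t) (hd' : d' ∈ dirs k t) (hne : d ≠ d') :
    Disjoint (alig S' r d) (alig S' r d') := by
  rw [Finset.disjoint_left]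
  intro T hT hT'
  obtain ⟨-, hTcard, b, hb⟩ := alig_mem hT
  obtain ⟨-, -, b', hb'⟩ := alig_mem hT'
  obtain ⟨p, hp, q, hq, hpq⟩ := Finset.one_lt_card.mp (by omega : 1 < T.card)
  -- differences
  have hdiff : ∀ i, p i - q i = (mval d p - mval d q) * (d i : ℤ) := by
    intro i
    have h1 : p i - mval d p * (d i : ℤ) = b i := congrFun (hb p hp) i
    have h2 : q i - mval d q * (d i : ℤ) = b i := congrFun (hb q hq) i
    nlinarith [h1, h2]
  have hdiff' : ∀ i, p i - q i = (mval d' p - mval d' q) * (d' i : ℤ) := by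
    intro i
    have h1 : p i - mval d' p * (d' i : ℤ) = b' i := congrFun (hb' p hp) i
    have h2 : q i - mval d' q * (d' i : ℤ) = b' i := congrFun (hb' q hq) i
    nlinarith [h1, h2]
  set j := mval d p - mval d q with hj
  set j' := mval d' p - mval d' q with hj'
  have hjne : j ≠ 0 := by
    intro h0
    apply hpq
    funext i
    have := hdiff i
    rw [h0] at this
    omega
  have hj'ne : j' ≠ 0 := by
    intro h0
    apply hpq
    funext i
    have := hdiff' i
    rw [h0] at this
    omega
  have hnat : ∀ i, j.natAbs * d i = j'.natAbs * d' i := by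
    intro i
    have := (hdiff i).symm.trans (hdiff' i)
    calc j.natAbs * d i = (j * (d i:ℤ)).natAbs := by
          rw [Int.natAbs_mul, Int.natAbs_natCast]
      _ = (j' * (d' i:ℤ)).natAbs := by rw [this]
      _ = j'.natAbs * d' i := by rw [Int.natAbs_mul, Int.natAbs_natCast]
  have hg := (mem_dirs hd).2
  have hg' := (mem_dirs hd').2
  have e1 : Finset.univ.gcd (fun i => j.natAbs * d i) = j.natAbs := by
    rw [Finset.gcd_mul_left, hg]
    simp
  have e2 : Finset.univ.gcd (fun i => j'.natAbs * d' i) = j'.natAbs := by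
    rw [Finset.gcd_mul_left, hg']
    simp
  have hfun : (fun i => j.natAbs * d i) = (fun i => j'.natAbs * d' i) := funext hnat
  have hjj' : j.natAbs = j'.natAbs := by rw [← e1, hfun, e2]
  apply hne
  funext i
  have h := hnat i
  rw [hjj'] at h
  have hja : j'.natAbs ≠ 0 := Int.natAbs_ne_zero.mpr hj'ne
  exact Nat.eq_of_mul_eq_mul_left (by omega) h

end SSG
set_option maxRecDepth 8000 in
set_option maxHeartbeats 1000000 in
/-- Super-saturation: for `s ∈ [0,0.9]`, `k, r ≥ 3` and `n ≥ max(e^{100k}, r^{100})`,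
every set `S` of `n^{k-s}` points of the grid `[n]^k` contains at least
`n^{2k-(k+1)s} / (r^{k+1}·(1000·9^k)^{k+1}·log n)` collinear `r`-element subsets. -/
theorem supersaturation_grid (s : ℝ) (hs0 : 0 ≤ s) (hs1 : s ≤ 0.9)
    (k r n : ℕ) (hk : 3 ≤ k) (hr : 3 ≤ r)
    (hn1 : Real.exp (100 * k) ≤ (n : ℝ)) (hn2 : r ^ 100 ≤ n)
    (S : Finset (Fin k → ℝ))
    (hgrid : ∀ x ∈ S, ∀ i, ∃ m : ℕ, 1 ≤ m ∧ m ≤ n ∧ x i = m)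
    (hcard : (S.card : ℝ) = (n : ℝ) ^ ((k : ℝ) - s)) :
    (n : ℝ) ^ (2 * (k : ℝ) - ((k : ℝ) + 1) * s) /
        ((r : ℝ) ^ (k + 1) * (1000 * 9 ^ k : ℝ) ^ (k + 1) * Real.log n)
      ≤ ({T : Finset (Fin k → ℝ) |
            T ⊆ S ∧ T.card = r ∧ Collinear ℝ (↑T : Set (Fin k → ℝ))}.ncard : ℝ) := by
  classical
  haveI : NeZero k := ⟨by omega⟩
  -- basic positivity facts
  have hX1 : (1:ℝ) ≤ ((n:ℝ)) := le_trans (Real.one_le_exp (by positivity)) hn1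
  have hX0 : (0:ℝ) < ((n:ℝ)) := by linarith
  have hn0 : 1 ≤ n := by exact_mod_cast hX1
  have hlog : (100*(k:ℝ)) ≤ Real.log ((n:ℝ)) := (Real.le_log_iff_exp_le hX0).mpr hn1
  have hlog300 : (300:ℝ) ≤ Real.log ((n:ℝ)) := by
    have : (300:ℝ) ≤ 100*(k:ℝ) := by
      have : (3:ℝ) ≤ (k:ℝ) := by exact_mod_cast hk
      linarith
    linarith
  have hk0 : (0:ℝ) < (k:ℝ) := Nat.cast_pos.mpr (by omega)
  have hr0 : (0:ℝ) < (r:ℝ) := Nat.cast_pos.mpr (by omega)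
  -- r ≤ ((n:ℝ))^(1/100)
  have hr100 : (r:ℝ) ≤ ((n:ℝ)) ^ ((1:ℝ)/100) := by
    have h1 : ((r:ℝ)^(100:ℕ)) ≤ ((n:ℝ)) := by exact_mod_cast hn2
    have h2 : ((r:ℝ)^(100:ℕ)) ^ ((1:ℝ)/100) ≤ ((n:ℝ)) ^ ((1:ℝ)/100) :=
      Real.rpow_le_rpow (by positivity) h1 (by norm_num)
    calc (r:ℝ) = ((r:ℝ)^(100:ℕ)) ^ ((1:ℝ)/100) := by
          rw [← Real.rpow_natCast (r:ℝ) 100, ← Real.rpow_mul (le_of_lt hr0)]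
          norm_num
      _ ≤ ((n:ℝ)) ^ ((1:ℝ)/100) := h2
  -- exp(2k) ≤ ((n:ℝ))^(1/50)
  have hek : Real.exp (2*(k:ℝ)) ≤ ((n:ℝ)) ^ ((1:ℝ)/50) := by
    have h1 : (Real.exp (100*(k:ℝ))) ^ ((1:ℝ)/50) ≤ ((n:ℝ)) ^ ((1:ℝ)/50) :=
      Real.rpow_le_rpow (Real.exp_pos _).le hn1 (by norm_num)
    calc Real.exp (2*(k:ℝ)) = (Real.exp (100*(k:ℝ))) ^ ((1:ℝ)/50) := by
          rw [← Real.exp_mul]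
          congr 1
          ring
      _ ≤ _ := h1
  -- 12 k r ≤ ((n:ℝ))^(1-s)
  have h1s : (1:ℝ)/10 ≤ 1 - s := by norm_num at hs1 ⊢; linarith
  have h12k : 12*(k:ℝ) ≤ Real.exp (2*(k:ℝ)) := by
    have he1 : (2.7:ℝ) ≤ Real.exp 1 := by
      have := Real.exp_one_gt_d9; norm_num at this ⊢; linarith
    have he3 : (12:ℝ) ≤ Real.exp 3 := by
      have h3 : Real.exp 3 = Real.exp 1 * Real.exp 1 * Real.exp 1 := by
        rw [← Real.exp_add, ← Real.exp_add]; norm_num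
      nlinarith
    have hkk : (k:ℝ) + 1 ≤ Real.exp (k:ℝ) := Real.add_one_le_exp _
    have h3k : (3:ℝ) ≤ (k:ℝ) := by exact_mod_cast hk
    calc 12*(k:ℝ) ≤ Real.exp 3 * Real.exp (k:ℝ) := by nlinarith
      _ = Real.exp (3 + (k:ℝ)) := (Real.exp_add _ _).symm
      _ ≤ Real.exp (2*(k:ℝ)) := by
          apply Real.exp_le_exp.mpr; linarith
  have h12kr : 12*(k:ℝ)*(r:ℝ) ≤ ((n:ℝ)) ^ (1-s) := by
    calc 12*(k:ℝ)*(r:ℝ) ≤ Real.exp (2*(k:ℝ)) * (((n:ℝ)) ^ ((1:ℝ)/100)) := by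
          apply mul_le_mul h12k hr100 (le_of_lt hr0) (Real.exp_pos _).le
      _ ≤ ((n:ℝ)) ^ ((1:ℝ)/50) * ((n:ℝ)) ^ ((1:ℝ)/100) := by
          apply mul_le_mul_of_nonneg_right hek (by positivity)
      _ = ((n:ℝ)) ^ ((1:ℝ)/50 + (1:ℝ)/100) := (Real.rpow_add hX0 _ _).symm
      _ ≤ ((n:ℝ)) ^ (1-s) := Real.rpow_le_rpow_of_exponent_le hX1 (by norm_num; linarith)
  -- define t
  set x : ℝ := ((n:ℝ)) ^ (1-s) / (6*(k:ℝ)*(r:ℝ)) with hxdef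
  have hkr0 : (0:ℝ) < 6*(k:ℝ)*(r:ℝ) := by positivity
  have hx2 : (2:ℝ) ≤ x := by
    rw [hxdef, le_div_iff₀ hkr0]
    linarith
  set t : ℕ := ⌊x⌋₊ with htdef
  have ht_le : (t:ℝ) ≤ x := Nat.floor_le (by linarith)
  have ht_ge : x/2 ≤ (t:ℝ) := by
    have := Nat.sub_one_lt_floor x
    rw [← htdef] at this
    linarith
  have ht1 : 1 ≤ t := by
    have : (1:ℝ) ≤ (t:ℝ) := by linarith
    exact_mod_cast this
  -- integer points
  set f : (Fin k → ℝ) → (Fin k → ℤ) := fun y i => ⌊y i⌋ with hfdef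
  set g : (Fin k → ℤ) → (Fin k → ℝ) := fun p i => (p i : ℝ) with hgdef
  have hfix : ∀ x ∈ S, ∀ i, ((f x i : ℤ):ℝ) = x i := by
    intro y hy i
    obtain ⟨m, _, _, hm⟩ := hgrid y hy i
    rw [hfdef]
    simp only [hm, Int.floor_natCast]
    norm_num
  have hinj : Set.InjOn f S := by
    intro a ha b hb hab
    funext i
    rw [← hfix a ha i, ← hfix b hb i, hab]
  have hginj : Function.Injective g := by
    intro a b hab
    funext i
    have h2 : ((a i : ℤ):ℝ) = ((b i : ℤ):ℝ) := congrFun hab i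
    exact_mod_cast h2
  have hgf : ∀ y ∈ S, g (f y) = y := by
    intro y hy
    funext i
    exact hfix y hy i
  set S' : Finset (Fin k → ℤ) := S.image f with hS'def
  have hS'card : S'.card = S.card := Finset.card_image_of_injOn hinj
  have hS'box : ∀ p ∈ S', ∀ i, 1 ≤ p i ∧ p i ≤ (n:ℤ) := by
    intro p hp i
    obtain ⟨y, hy, rfl⟩ := Finset.mem_image.mp hp
    obtain ⟨m, hm1, hm2, hm⟩ := hgrid y hy i
    rw [hfdef]
    simp only [hm, Int.floor_natCast]
    constructor
    · exact_mod_cast hm1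
    · exact_mod_cast hm2
  -- the collinear family
  set 𝒯 : Finset (Finset (Fin k → ℤ)) := (SSG.dirs k t).biUnion (SSG.alig S' r) with h𝒯def
  set ℱ : Finset (Finset (Fin k → ℝ)) := 𝒯.image (fun T => T.image g) with hℱdef
  set Tgt : Set (Finset (Fin k → ℝ)) :=
    {T : Finset (Fin k → ℝ) | T ⊆ S ∧ T.card = r ∧ Collinear ℝ (↑T : Set (Fin k → ℝ))} with hTgt
  have hTgtFin : Tgt.Finite := by
    apply Set.Finite.subset S.powerset.finite_toSet
    intro T hT
    simp only [Finset.coe_powerset, Set.mem_preimage, Set.mem_powerset_iff]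
    exact_mod_cast (Finset.coe_subset.mpr hT.1)
  have hsub : (↑ℱ : Set (Finset (Fin k → ℝ))) ⊆ Tgt := by
    intro T hT
    rw [hℱdef] at hT
    simp only [Finset.coe_image, Set.mem_image, Finset.mem_coe] at hT
    obtain ⟨T', hT', rfl⟩ := hT
    rw [h𝒯def, Finset.mem_biUnion] at hT'
    obtain ⟨d, hd, hTd⟩ := hT'
    obtain ⟨hTS', hTcard, b, hb⟩ := SSG.alig_mem hTd
    refine ⟨?_, ?_, ?_⟩
    · intro y hy
      obtain ⟨p, hp, rfl⟩ := Finset.mem_image.mp hy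
      obtain ⟨z, hz, rfl⟩ := Finset.mem_image.mp (hS'def ▸ hTS' hp)
      rw [hgf z hz]
      exact hz
    · rw [Finset.card_image_of_injective _ hginj, hTcard]
    · rw [collinear_iff_exists_forall_eq_smul_vadd]
      refine ⟨g b, (fun i => (d i : ℝ)), ?_⟩
      intro y hy
      rw [Finset.mem_coe, Finset.mem_image] at hy
      obtain ⟨p, hp, rfl⟩ := hy
      refine ⟨(SSG.mval d p : ℝ), ?_⟩
      funext i
      have hbp : p i = b i + SSG.mval d p * (d i : ℤ) := by
        have := congrFun (hb p hp) i
        rw [SSG.bse] at this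
        omega
      show ((p i : ℤ):ℝ) = (SSG.mval d p : ℝ) * (d i : ℝ) + ((b i : ℤ):ℝ)
      rw [hbp]
      push_cast
      ring
  have hℱcard : ℱ.card = 𝒯.card :=
    Finset.card_image_of_injective _ (Finset.image_injective hginj)
  have hncard : (𝒯.card : ℝ) ≤ (Tgt.ncard : ℝ) := by
    have h1 : (↑ℱ : Set (Finset (Fin k → ℝ))).ncard ≤ Tgt.ncard :=
      Set.ncard_le_ncard hsub hTgtFin
    rw [Set.ncard_coe_finset, hℱcard] at h1
    exact_mod_cast h1
  -- counting
  have h𝒯sum : 𝒯.card = ∑ d ∈ SSG.dirs k t, (SSG.alig S' r d).card := by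
    rw [h𝒯def]
    apply Finset.card_biUnion
    intro d hd d' hd' hne
    exact SSG.alig_disj (by omega) hd hd' hne
  have hper : ∀ d ∈ SSG.dirs k t,
      ((S.card : ℝ) - 2*(r:ℝ)*((k:ℝ)*(t:ℝ)*(((n:ℝ))^(k-1 : ℕ))) ≤ ((SSG.alig S' r d).card : ℝ)) := by
    intro d hd
    have h1 := SSG.alig_lb (S' := S') (d := d) (r := r) (by omega)
    have h2 := SSG.img_card (S' := S') (d := d) (t := t) (n := n)
      hS'box (fun i => (SSG.mem_dirs hd).1 i)
    have h3 : (S'.card : ℝ) ≤ ((SSG.alig S' r d).card : ℝ)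
        + 2*(r:ℝ)*((SSG.img S' d).card : ℝ) := by exact_mod_cast h1
    have h4 : ((SSG.img S' d).card : ℝ) ≤ (k:ℝ)*(t:ℝ)*(((n:ℝ))^(k-1:ℕ)) := by
      have : ((k * t * n^(k-1) : ℕ) : ℝ) = (k:ℝ)*(t:ℝ)*(((n:ℝ))^(k-1:ℕ)) := by push_cast; ring
      rw [← this]
      exact_mod_cast h2
    rw [hS'card] at h3
    have h5 : 2*(r:ℝ)*((SSG.img S' d).card : ℝ) ≤ 2*(r:ℝ)*((k:ℝ)*(t:ℝ)*(((n:ℝ))^(k-1:ℕ))) :=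
      mul_le_mul_of_nonneg_left h4 (by positivity)
    linarith
  -- the error term bound : 2 r k t ((n:ℝ))^{k-1} ≤ ((n:ℝ))^{k-s}/3
  have hXk1 : (((n:ℝ))^(k-1 : ℕ)) = ((n:ℝ)) ^ ((k:ℝ)-1) := by
    rw [← Real.rpow_natCast ((n:ℝ)) (k-1)]
    congr 1
    push_cast [Nat.cast_sub (by omega : 1 ≤ k)]
    ring
  have hXks : ((n:ℝ)) ^ (1-s) * ((n:ℝ)) ^ ((k:ℝ)-1) = ((n:ℝ)) ^ ((k:ℝ)-s) := by
    rw [← Real.rpow_add hX0]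
    congr 1
    ring
  have herr : 2*(r:ℝ)*((k:ℝ)*(t:ℝ)*(((n:ℝ))^(k-1:ℕ))) ≤ ((n:ℝ)) ^ ((k:ℝ)-s) / 3 := by
    have h1 : 2*(r:ℝ)*((k:ℝ)*(t:ℝ)*(((n:ℝ))^(k-1:ℕ)))
        ≤ 2*(r:ℝ)*((k:ℝ)*x*(((n:ℝ))^(k-1:ℕ))) := by
      gcongr
    have h2 : 2*(r:ℝ)*((k:ℝ)*x*(((n:ℝ))^(k-1:ℕ))) = ((n:ℝ)) ^ (1-s) * ((n:ℝ))^((k:ℝ)-1) / 3 := by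
      rw [hxdef, hXk1]
      field_simp
      ring
    rw [h2, hXks] at h1
    exact h1
  -- S.card - error ≥ (2/3) ((n:ℝ))^{k-s}
  have hmain : (2/3) * ((n:ℝ)) ^ ((k:ℝ)-s) ≤ (S.card : ℝ) - 2*(r:ℝ)*((k:ℝ)*(t:ℝ)*(((n:ℝ))^(k-1:ℕ))) := by
    rw [hcard]
    have hXks0 : (0:ℝ) ≤ ((n:ℝ)) ^ ((k:ℝ)-s) := by positivity
    linarith [herr]
  -- total
  have hDcard := SSG.dirs_card (k := k) (t := t) hk
  have htot : (3/4)*(t:ℝ)^k * ((2/3) * ((n:ℝ)) ^ ((k:ℝ)-s)) ≤ (𝒯.card : ℝ) := by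
    have h1 : ∑ d ∈ SSG.dirs k t, ((S.card : ℝ) - 2*(r:ℝ)*((k:ℝ)*(t:ℝ)*(((n:ℝ))^(k-1:ℕ))))
        ≤ ∑ d ∈ SSG.dirs k t, ((SSG.alig S' r d).card : ℝ) :=
      Finset.sum_le_sum hper
    rw [Finset.sum_const, nsmul_eq_mul] at h1
    have h2 : (𝒯.card : ℝ) = ∑ d ∈ SSG.dirs k t, ((SSG.alig S' r d).card : ℝ) := by
      rw [h𝒯sum]; push_cast; ring
    rw [← h2] at h1
    have h3 : (3/4)*(t:ℝ)^k * ((2/3) * ((n:ℝ)) ^ ((k:ℝ)-s))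
        ≤ ((SSG.dirs k t).card : ℝ) * ((S.card : ℝ) - 2*(r:ℝ)*((k:ℝ)*(t:ℝ)*(((n:ℝ))^(k-1:ℕ)))) := by
      have hXks0 : (0:ℝ) ≤ (2/3) * ((n:ℝ)) ^ ((k:ℝ)-s) := by positivity
      have := mul_le_mul hDcard hmain hXks0 (Nat.cast_nonneg _)
      nlinarith [this]
    linarith
  -- lower bound (t)^k ≥ (x/2)^k and conclude
  have hxk : (((n:ℝ))^(1-s) / (12*(k:ℝ)*(r:ℝ)))^k ≤ (t:ℝ)^k := by
    have hq : ((n:ℝ))^(1-s) / (12*(k:ℝ)*(r:ℝ)) = x/2 := by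
      rw [hxdef, div_div]
      congr 1
      ring
    rw [hq]
    exact pow_le_pow_left₀ (by linarith) ht_ge k
  have hfinal1 : ((n:ℝ)) ^ (2 * (k : ℝ) - ((k : ℝ) + 1) * s) / (2*(12*(k:ℝ)*(r:ℝ))^k)
      ≤ (𝒯.card : ℝ) := by
    have e1 : (((n:ℝ))^(1-s) / (12*(k:ℝ)*(r:ℝ)))^k = ((n:ℝ))^((1-s)*(k:ℝ)) / (12*(k:ℝ)*(r:ℝ))^k := by
      rw [div_pow]
      congr 1
      rw [Real.rpow_mul (le_of_lt hX0), Real.rpow_natCast]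
    have e2 : ((n:ℝ))^((1-s)*(k:ℝ)) * ((n:ℝ))^((k:ℝ)-s) = ((n:ℝ)) ^ (2 * (k : ℝ) - ((k : ℝ) + 1) * s) := by
      rw [← Real.rpow_add hX0]
      congr 1
      ring
    have h5 : (1/2) * (((n:ℝ))^((1-s)*(k:ℝ)) / (12*(k:ℝ)*(r:ℝ))^k) * ((n:ℝ))^((k:ℝ)-s) ≤ (𝒯.card : ℝ) := by
      have hXks0 : (0:ℝ) < ((n:ℝ)) ^ ((k:ℝ)-s) := by positivity
      have := hxk
      rw [e1] at this
      nlinarith [htot, hXks0, this]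
    calc ((n:ℝ)) ^ (2 * (k : ℝ) - ((k : ℝ) + 1) * s) / (2*(12*(k:ℝ)*(r:ℝ))^k)
        = (1/2) * (((n:ℝ))^((1-s)*(k:ℝ)) / (12*(k:ℝ)*(r:ℝ))^k) * ((n:ℝ))^((k:ℝ)-s) := by
          rw [← e2]
          field_simp
          try ring
      _ ≤ _ := h5
  -- compare denominators
  have hden : 2*(12*(k:ℝ)*(r:ℝ))^k ≤ (r : ℝ) ^ (k + 1) * (1000 * 9 ^ k : ℝ) ^ (k + 1) * Real.log ((n:ℝ)) := by
    have hkle : (k:ℝ) ≤ (9:ℝ)^k := by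
      have := Nat.lt_pow_self (a := 9) (n := k) (by norm_num)
      exact_mod_cast this.le
    have hr1 : (1:ℝ) ≤ (r:ℝ) := by
      have : (1:ℕ) ≤ r := by omega
      exact_mod_cast this
    have step1 : (12*(k:ℝ)*(r:ℝ))^k ≤ (1000 * 9^k * (r:ℝ))^k := by
      apply pow_le_pow_left₀ (by positivity)
      have h9' : (1:ℝ) ≤ (9:ℝ)^k := one_le_pow₀ (by norm_num)
      have h12 : 12*(k:ℝ) ≤ 1000 * (9:ℝ)^k := by nlinarith [hkle, h9']
      exact mul_le_mul_of_nonneg_right h12 hr0.le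
    have step2 : ((1000 * (9:ℝ)^k * (r:ℝ)))^k = (1000 * (9:ℝ)^k)^k * (r:ℝ)^k :=
      mul_pow _ _ _
    have step3 : 2*((1000 * (9:ℝ)^k)^k * (r:ℝ)^k)
        ≤ (r : ℝ) ^ (k + 1) * ((1000 * 9 ^ k : ℝ) ^ (k+1)) * Real.log ((n:ℝ)) := by
      have e3 : (1000 * (9:ℝ)^k)^(k+1) = (1000 * (9:ℝ)^k)^k * (1000 * (9:ℝ)^k) := pow_succ _ _
      have e4 : (r:ℝ)^(k+1) = (r:ℝ)^k * (r:ℝ) := pow_succ _ _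
      have h9 : (1:ℝ) ≤ (9:ℝ)^k := one_le_pow₀ (by norm_num)
      have hA : (0:ℝ) < (1000 * (9:ℝ)^k)^k := by positivity
      have hB : (0:ℝ) < (r:ℝ)^k := by positivity
      have key : (2:ℝ) ≤ (r:ℝ) * (1000 * (9:ℝ)^k) * Real.log ((n:ℝ)) := by
        calc (2:ℝ) ≤ 1 * (1000 * 1) * 300 := by norm_num
          _ ≤ (r:ℝ) * (1000 * (9:ℝ)^k) * Real.log ((n:ℝ)) := by
              gcongr <;> first | exact hr1 | exact h9 | exact hlog300 | norm_num
      calc 2*((1000 * (9:ℝ)^k)^k * (r:ℝ)^k)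
          ≤ ((r:ℝ) * (1000 * (9:ℝ)^k) * Real.log ((n:ℝ)))*((1000 * (9:ℝ)^k)^k * (r:ℝ)^k) :=
            mul_le_mul_of_nonneg_right key (le_of_lt (mul_pos hA hB))
        _ = (r : ℝ) ^ (k + 1) * ((1000 * 9 ^ k : ℝ) ^ (k+1)) * Real.log ((n:ℝ)) := by
            rw [e3, e4]; ring
    calc 2*(12*(k:ℝ)*(r:ℝ))^k ≤ 2*((1000 * (9:ℝ)^k)^k * (r:ℝ)^k) := by
          rw [← step2]; linarith [step1]
      _ ≤ _ := step3
  -- finish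
  have hnum0 : (0:ℝ) ≤ ((n:ℝ)) ^ (2 * (k : ℝ) - ((k : ℝ) + 1) * s) := by positivity
  have hd1 : (0:ℝ) < 2*(12*(k:ℝ)*(r:ℝ))^k := by positivity
  calc ((n:ℝ)) ^ (2 * (k : ℝ) - ((k : ℝ) + 1) * s) /
        ((r : ℝ) ^ (k + 1) * (1000 * 9 ^ k : ℝ) ^ (k + 1) * Real.log ((n:ℝ)))
      ≤ ((n:ℝ)) ^ (2 * (k : ℝ) - ((k : ℝ) + 1) * s) / (2*(12*(k:ℝ)*(r:ℝ))^k) := by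
        gcongr
    _ ≤ (𝒯.card : ℝ) := hfinal1
    _ ≤ (Tgt.ncard : ℝ) := hncard
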